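/- Let (R, m) be a Noetherian local ring, M a finitely generated R-module, and N ⊆ M a submodule. Let I be an ideal of R, r ≥ 1 an integer, and y ∈ I an element such that Iⁿ = y·I^{n−1} for all n ≥ r, and such that y is a non-zerodivisor on M/N (i.e., for x ∈ M, y·x ∈ N implies x ∈ N). Then for every n ≥ r one has IⁿM ∩ N = I^{n−r}(I^rM ∩ N). -/
import Mathlib

open scoped Pointwise


/-- The Cohen–Macaulay step in Theorem 2.7: if `y ∈ I` satisfies `Iⁿ = y·I^{n-1}` for
`n ≥ r` and `y` is a non-zerodivisor on `M/N`, then `IⁿM ∩ N = I^{n-r}(I^rM ∩ N)` for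
all `n ≥ r`. -/
theorem stmt6 (R : Type*) [CommRing R] [IsNoetherianRing R] [IsLocalRing R]
    (M : Type*) [AddCommGroup M] [Module R M] [Module.Finite R M] (N : Submodule R M)
    (I : Ideal R) (r : ℕ) (hr : 1 ≤ r) (y : R) (hyI : y ∈ I)
    (hy : ∀ n : ℕ, r ≤ n → I ^ n = Ideal.span {y} * I ^ (n - 1))
    (hreg : ∀ x : M, y • x ∈ N → x ∈ N) :
    ∀ n : ℕ, r ≤ n →
      I ^ n • (⊤ : Submodule R M) ⊓ N = I ^ (n - r) • (I ^ r • (⊤ : Submodule R M) ⊓ N) := by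
  have hrev : ∀ n : ℕ, r ≤ n →
      I ^ (n - r) • (I ^ r • (⊤ : Submodule R M) ⊓ N) ≤ I ^ n • (⊤ : Submodule R M) ⊓ N := by
    intro n hn
    refine le_inf ?_ ?_
    · calc I ^ (n - r) • (I ^ r • (⊤ : Submodule R M) ⊓ N)
          ≤ I ^ (n - r) • (I ^ r • (⊤ : Submodule R M)) :=
            Submodule.smul_mono le_rfl inf_le_left
        _ = (I ^ (n - r) * I ^ r) • (⊤ : Submodule R M) := (mul_smul _ _ _).symm
        _ = I ^ n • (⊤ : Submodule R M) := by rw [← pow_add, Nat.sub_add_cancel hn]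
    · exact le_trans (Submodule.smul_mono le_rfl inf_le_right) Submodule.smul_le_right
  intro n hn
  induction n, hn using Nat.le_induction with
  | base => simp [Nat.sub_self]
  | succ n hn ih =>
    refine le_antisymm ?_ (hrev _ (le_trans hn (Nat.le_succ n)))
    rintro x ⟨hx1, hx2⟩
    rw [hy (n + 1) (le_trans hn (Nat.le_succ n)), Nat.add_sub_cancel, mul_smul,
      Submodule.ideal_span_singleton_smul] at hx1
    obtain ⟨z, hz, rfl⟩ : ∃ z ∈ I ^ n • (⊤ : Submodule R M), y • z = x := by
      have h' : x ∈ y • (↑(I ^ n • (⊤ : Submodule R M)) : Set M) := by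
        rw [← Submodule.coe_pointwise_smul]; exact hx1
      exact Set.mem_smul_set.mp h'
    have hzN : z ∈ N := hreg z hx2
    have hz' : z ∈ I ^ (n - r) • (I ^ r • (⊤ : Submodule R M) ⊓ N) := ih ▸ ⟨hz, hzN⟩
    have : y • z ∈ I • (I ^ (n - r) • (I ^ r • (⊤ : Submodule R M) ⊓ N)) :=
      Submodule.smul_mem_smul hyI hz'
    rw [← mul_smul, ← pow_succ'] at this
    rwa [Nat.succ_sub hn]
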